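/- Let S be a transitive subsemigroup of IS(X) containing a nonzero finitary element. Then S contains an inverse transitive subsemigroup consisting of finitary elements; in particular S contains a transitive subsemigroup T such that for every b ∈ T the inverse partial bijection b⁻¹ lies in T. -/

import Mathlib

def IsSubsemigroup {X : Type*} (S : Set (X ≃. X)) : Prop :=
  ∀ f ∈ S, ∀ g ∈ S, f.trans g ∈ S

def IsTransitiveSet {X : Type*} (S : Set (X ≃. X)) : Prop :=
  ∀ x y : X, ∃ f ∈ S, f x = some y

def pdom {X : Type*} (f : X ≃. X) : Set X := {x | f x ≠ none}

namespace InvTransAux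

variable {X : Type*}

lemma trans_apply (f g : X ≃. X) (a : X) : (f.trans g) a = (f a).bind g := rfl

lemma pdom_trans_subset (f g : X ≃. X) : pdom (f.trans g) ⊆ pdom f := by
  intro x hx
  simp only [pdom, Set.mem_setOf_eq, trans_apply] at hx ⊢
  intro h; rw [h] at hx; exact hx rfl

lemma inj_aux (f : X ≃. X) {x₁ x₂ y : X} (h1 : f x₁ = some y) (h2 : f x₂ = some y) :
    x₁ = x₂ := by
  have e1 : f.symm y = some x₁ := f.eq_some_iff.2 h1
  have e2 : f.symm y = some x₂ := f.eq_some_iff.2 h2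
  exact Option.some_injective _ (e1 ▸ e2).symm ▸ rfl

lemma exists_of_ne_bot {b : X ≃. X} (h : b ≠ ⊥) : ∃ x y, b x = some y := by
  by_contra hc
  push_neg at hc
  apply h
  ext x
  cases hbx : b x with
  | none => simp [PEquiv.bot_apply]
  | some y => exact absurd hbx (hc x y)

lemma pdom_symm_eq (f : X ≃. X) : pdom f.symm = (fun x => (f x).getD x) '' pdom f := by
  ext y
  constructor
  · intro hy
    cases hsy : f.symm y with
    | none => exact absurd hsy hy
    | some x =>
      have hx : f x = some y := f.eq_some_iff.1 hsy
      exact ⟨x, by simp [pdom, hx], by simp [hx]⟩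
  · rintro ⟨x, hx, rfl⟩
    cases hfx : f x with
    | none => exact absurd hfx hx
    | some z =>
      have : f.symm z = some x := f.eq_some_iff.2 hfx
      simp [pdom, hfx, this]

lemma pdom_symm_finite {f : X ≃. X} (hf : (pdom f).Finite) : (pdom f.symm).Finite := by
  rw [pdom_symm_eq]; exact hf.image _

lemma ncard_pdom_symm {f : X ≃. X} (hf : (pdom f).Finite) :
    (pdom f.symm).ncard = (pdom f).ncard := by
  have h1 : (pdom f.symm).ncard ≤ (pdom f).ncard := by
    rw [pdom_symm_eq]; exact Set.ncard_image_le hf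
  have h2 : (pdom f).ncard ≤ (pdom f.symm).ncard := by
    have := pdom_symm_finite hf
    calc (pdom f).ncard = (pdom f.symm.symm).ncard := by rw [PEquiv.symm_symm]
    _ ≤ (pdom f.symm).ncard := by
        rw [pdom_symm_eq]; exact Set.ncard_image_le this
  omega

lemma pdom_trans_finite_card (f g : X ≃. X) (hg : (pdom g).Finite) :
    (pdom (f.trans g)).Finite ∧ (pdom (f.trans g)).ncard ≤ (pdom g).ncard := by
  set s := pdom (f.trans g) with hs
  set φ : X → X := fun x => (f x).getD x with hφ
  have hmemf : ∀ x ∈ s, ∃ y, f x = some y ∧ g y ≠ none := by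
    intro x hx
    cases hfx : f x with
    | none => exact absurd (by simp [trans_apply, hfx]) hx
    | some y =>
      refine ⟨y, rfl, ?_⟩
      intro hgy
      exact hx (by simp [trans_apply, hfx, hgy])
  have hinj : Set.InjOn φ s := by
    intro x₁ h₁ x₂ h₂ he
    obtain ⟨y₁, hy₁, -⟩ := hmemf x₁ h₁
    obtain ⟨y₂, hy₂, -⟩ := hmemf x₂ h₂
    simp only [hφ, hy₁, hy₂, Option.getD_some] at he
    exact inj_aux f hy₁ (he ▸ hy₂)
  have himg : φ '' s ⊆ pdom g := by
    rintro - ⟨x, hx, rfl⟩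
    obtain ⟨y, hy, hgy⟩ := hmemf x hx
    simpa [hφ, hy, pdom] using hgy
  have hfin : s.Finite := Set.Finite.of_finite_image (hg.subset himg) hinj
  refine ⟨hfin, ?_⟩
  calc s.ncard = (φ '' s).ncard := (Set.ncard_image_of_injOn hinj).symm
  _ ≤ (pdom g).ncard := Set.ncard_le_ncard himg hg

/-- iterated composition, with the step on the left so that `pdom (vpow v (n+1)) ⊆ pdom v`. -/
def vpow (v : X ≃. X) : ℕ → (X ≃. X)
  | 0 => PEquiv.refl X
  | n + 1 => v.trans (vpow v n)

lemma vpow_mem {S : Set (X ≃. X)} (hS : IsSubsemigroup S) {v : X ≃. X} (hv : v ∈ S) :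
    ∀ n, vpow v (n + 1) ∈ S := by
  intro n
  induction n with
  | zero => simpa [vpow, PEquiv.trans_refl] using hv
  | succ n ih => exact hS v hv _ ih

lemma pdom_vpow_subset (v : X ≃. X) (n : ℕ) : pdom (vpow v (n + 1)) ⊆ pdom v :=
  pdom_trans_subset _ _

end InvTransAux

open InvTransAux in
/-- A transitive subsemigroup of `IS(X)` containing a nonzero finitary element contains
an inverse transitive subsemigroup consisting of finitary elements. -/
theorem exists_inverse_transitive_subsemigroup {X : Type*} (S : Set (X ≃. X))
    (hS : IsSubsemigroup S) (hStr : IsTransitiveSet S)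
    (hfin : ∃ f ∈ S, f ≠ (⊥ : X ≃. X) ∧ (pdom f).Finite) :
    ∃ T ⊆ S, IsSubsemigroup T ∧ IsTransitiveSet T ∧
      (∀ b ∈ T, (pdom b).Finite) ∧ (∀ b ∈ T, b.symm ∈ T) := by
  classical
  set K : Set ℕ := {n | ∃ s ∈ S, s ≠ ⊥ ∧ (pdom s).Finite ∧ (pdom s).ncard = n} with hK
  obtain ⟨f₀, hf₀S, hf₀ne, hf₀fin⟩ := hfin
  have hKne : K.Nonempty := ⟨_, f₀, hf₀S, hf₀ne, hf₀fin, rfl⟩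
  set k := sInf K with hk
  have hkK : k ∈ K := Nat.sInf_mem hKne
  obtain ⟨s₀, hs₀S, hs₀ne, hs₀fin, hs₀card⟩ := hkK
  have hmin : ∀ s ∈ S, s ≠ ⊥ → (pdom s).Finite → k ≤ (pdom s).ncard :=
    fun s hs hne hfins => Nat.sInf_le ⟨s, hs, hne, hfins, rfl⟩
  refine ⟨{s | s ∈ S ∧ (pdom s).Finite ∧ (pdom s).ncard ≤ k}, fun s hs => hs.1, ?_, ?_,
    fun b hb => hb.2.1, ?_⟩
  · -- subsemigroup
    rintro f ⟨hfS, hffin, hfcard⟩ g ⟨hgS, -, -⟩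
    have hsub := pdom_trans_subset f g
    exact ⟨hS f hfS g hgS, hffin.subset hsub,
      le_trans (Set.ncard_le_ncard hsub hffin) hfcard⟩
  · -- transitive
    intro x y
    obtain ⟨a, c, hac⟩ := exists_of_ne_bot hs₀ne
    obtain ⟨g, hgS, hgx⟩ := hStr x a
    obtain ⟨h, hhS, hhy⟩ := hStr c y
    refine ⟨(g.trans s₀).trans h, ⟨hS _ (hS g hgS s₀ hs₀S) h hhS, ?_, ?_⟩, ?_⟩
    · exact ((pdom_trans_finite_card g s₀ hs₀fin).1).subset (pdom_trans_subset _ _)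
    · calc (pdom ((g.trans s₀).trans h)).ncard
          ≤ (pdom (g.trans s₀)).ncard :=
            Set.ncard_le_ncard (pdom_trans_subset _ _) (pdom_trans_finite_card g s₀ hs₀fin).1
      _ ≤ (pdom s₀).ncard := (pdom_trans_finite_card g s₀ hs₀fin).2
      _ = k := hs₀card
    · simp [trans_apply, hgx, hac, hhy]
  · -- closed under symm
    rintro b ⟨hbS, hbfin, hbcard⟩
    by_cases hbot : b = ⊥
    · subst hbot
      refine ⟨by simpa [PEquiv.symm_bot] using hbS, ?_, ?_⟩ <;>
        simp [PEquiv.symm_bot, pdom, PEquiv.bot_apply]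
    · have hcard : (pdom b).ncard = k := le_antisymm hbcard (hmin b hbS hbot hbfin)
      set A := pdom b with hA
      obtain ⟨x₀, y₀, hx₀⟩ := exists_of_ne_bot hbot
      obtain ⟨t, htS, hty⟩ := hStr y₀ x₀
      set v := b.trans t with hv
      set p := v.trans b with hp
      have hpS : p ∈ S := hS _ (hS b hbS t htS) b hbS
      have hpx : p x₀ = some y₀ := by
        simp [hp, hv, trans_apply, hx₀, hty]
      have hpne : p ≠ ⊥ := by
        intro h; rw [h] at hpx; simp [PEquiv.bot_apply] at hpx
      have hpsub : pdom p ⊆ A := (pdom_trans_subset v b).trans (pdom_trans_subset b t)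
      have hpeq : pdom p = A :=
        Set.eq_of_subset_of_ncard_le hpsub
          (by rw [hcard]; exact hmin p hpS hpne (hbfin.subset hpsub)) hbfin
      have hstep : ∀ a ∈ A, ∃ d, v a = some d ∧ d ∈ A := by
        intro a ha
        have hpa : p a ≠ none := by rw [← hpeq] at ha; exact ha
        cases hva : v a with
        | none => exact absurd (by simp [hp, trans_apply, hva]) hpa
        | some d =>
          refine ⟨d, rfl, ?_⟩
          intro hd
          exact hpa (by simp [hp, trans_apply, hva, hd])
      have hAfin : A.Finite := hbfin
      haveI : Finite ↥A := hAfin.to_subtype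
      set σ : ↥A → ↥A := fun a => ⟨(hstep a a.2).choose, (hstep a a.2).choose_spec.2⟩ with hσdef
      have hσ : ∀ a : ↥A, v ↑a = some ↑(σ a) := fun a => (hstep a a.2).choose_spec.1
      have hσinj : Function.Injective σ := by
        intro a₁ a₂ he
        have h1 : v ↑a₁ = some ↑(σ a₁) := hσ a₁
        have h2 : v ↑a₂ = some ↑(σ a₁) := by rw [hσ a₂, he]
        exact Subtype.ext (inj_aux v h1 h2)
      have hσbij : Function.Bijective σ := Finite.injective_iff_bijective.1 hσinj
      set e : Equiv.Perm ↥A := Equiv.ofBijective σ hσbij with he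
      have heapp : ∀ a : ↥A, e a = σ a := fun a => rfl
      set m := orderOf e with hm
      have hmpos : 0 < m := orderOf_pos e
      have hme : e ^ m = 1 := pow_orderOf_eq_one e
      have hpow : ∀ n (a : ↥A), vpow v n ↑a = some ↑((e ^ n) a) := by
        intro n
        induction n with
        | zero => intro a; simp [vpow]
        | succ n ih =>
          intro a
          have : vpow v (n + 1) ↑a = (v ↑a).bind (vpow v n) := rfl
          have h2 : (some (↑(σ a) : X)).bind ⇑(vpow v n) = vpow v n ↑(σ a) := rfl
          rw [this, hσ a, h2, ih (σ a), pow_succ, Equiv.Perm.mul_apply, heapp]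
      obtain ⟨m', hm'⟩ : ∃ m', 2 * m - 1 = m' + 1 := ⟨2 * m - 2, by omega⟩
      set u := vpow v (2 * m - 1) with hu
      have huS : u ∈ S := by rw [hu, hm']; exact vpow_mem hS (hS b hbS t htS) m'
      have hupdom : pdom u = A := by
        apply Set.Subset.antisymm
        · rw [hu, hm']
          exact (pdom_vpow_subset v m').trans (pdom_trans_subset b t)
        · intro a ha
          have := hpow (2 * m - 1) ⟨a, ha⟩
          simp only [pdom, Set.mem_setOf_eq, hu, this]
          exact Option.some_ne_none _
      have he2m : e ^ (2 * m) = 1 := by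
        rw [two_mul, pow_add, hme, one_mul]
      have hucycle : ∀ a : ↥A, u ↑(σ a) = some ↑a := by
        intro a
        have h1 := hpow (2 * m - 1) (σ a)
        rw [hu, h1]
        congr 2
        have : (e ^ (2 * m - 1)) (σ a) = (e ^ (2 * m - 1) * e) a := by
          simp [Equiv.Perm.mul_apply, heapp]
        rw [this, ← pow_succ]
        have h2 : 2 * m - 1 + 1 = 2 * m := by omega
        rw [h2, he2m]
        simp
      set w := t.trans u with hw
      have hwS : w ∈ S := hS t htS u huS
      have hwfc := pdom_trans_finite_card t u (hupdom ▸ hAfin)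
      set B := pdom b.symm with hB
      have hBfin : B.Finite := pdom_symm_finite hbfin
      have hBcard : B.ncard = k := by rw [hB, ncard_pdom_symm hbfin, ← hA, hcard]
      -- every y ∈ B is of form b a = some y with a ∈ A, and w y = some a
      have hkey : ∀ y ∈ B, ∃ a : ↥A, b ↑a = some y ∧ w y = some ↑a := by
        intro y hy
        cases hsy : b.symm y with
        | none => exact absurd hsy hy
        | some a =>
          have hba : b a = some y := b.eq_some_iff.1 hsy
          have haA : a ∈ A := by simp [hA, pdom, hba]
          refine ⟨⟨a, haA⟩, hba, ?_⟩
          have hva : v a = some ↑(σ ⟨a, haA⟩) := hσ ⟨a, haA⟩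
          have hty' : t y = some ↑(σ ⟨a, haA⟩) := by
            rw [hv] at hva
            simpa [trans_apply, hba] using hva
          have : w y = u ↑(σ ⟨a, haA⟩) := by simp [hw, trans_apply, hty']
          rw [this, hucycle ⟨a, haA⟩]
      have hBsubW : B ⊆ pdom w := by
        intro y hy
        obtain ⟨a, -, hwy⟩ := hkey y hy
        simp [pdom, hwy]
      have hWeq : pdom w = B := by
        refine (Set.eq_of_subset_of_ncard_le hBsubW ?_ hwfc.1).symm
        rw [hBcard]
        calc (pdom w).ncard ≤ (pdom u).ncard := hwfc.2
        _ = k := by rw [hupdom]; exact hcard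
      have hfinal : b.symm = w := by
        ext y
        by_cases hy : y ∈ B
        · obtain ⟨a, hba, hwy⟩ := hkey y hy
          rw [hwy, b.eq_some_iff.2 hba]
        · have h1 : b.symm y = none := by
            by_contra h; exact hy h
          have h2 : w y = none := by
            rw [← hWeq] at hy
            by_contra h; exact hy h
          rw [h1, h2]
      rw [hfinal]
      exact ⟨hwS, hWeq ▸ hBfin, by rw [hWeq, hBcard]⟩
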